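/- Let T ⊂ ℝ² be a nondegenerate triangle with vertices z₁, z₂, z₃, edges eᵢ opposite zᵢ with lengths ℓᵢ = |eᵢ| and outward unit normals nᵢ. Then for every affine map v : ℝ² → ℝ², ∫_T (div v) dx = −(1/2) ∑_{i=1}^{3} ℓᵢ (v(zᵢ) · nᵢ); equivalently, since div v is the constant trace of the linear part A of v, area(T) · trace(A) = −(1/2) ∑_{i=1}^{3} ℓᵢ (v(zᵢ) · nᵢ). -/

import Mathlib

open scoped RealInnerProductSpace
open MeasureTheory

section AuxDivergenceTriangle
open Set

lemma vol_tri_prod : (volume : Measure (ℝ × ℝ)) {p | 0 ≤ p.1 ∧ 0 ≤ p.2 ∧ p.1 + p.2 ≤ 1}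
    = ENNReal.ofReal (1/2) := by
  have hcl : IsClosed {p : ℝ × ℝ | 0 ≤ p.1 ∧ 0 ≤ p.2 ∧ p.1 + p.2 ≤ 1} := by
    apply IsClosed.inter (isClosed_le continuous_const continuous_fst)
    exact IsClosed.inter (isClosed_le continuous_const continuous_snd)
      (isClosed_le (continuous_fst.add continuous_snd) continuous_const)
  have hmeas := hcl.measurableSet
  rw [Measure.volume_eq_prod, Measure.prod_apply hmeas]
  have hfib : ∀ x : ℝ, volume (Prod.mk x ⁻¹' {p : ℝ × ℝ | 0 ≤ p.1 ∧ 0 ≤ p.2 ∧ p.1 + p.2 ≤ 1})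
      = (Ici (0:ℝ)).indicator (fun x => ENNReal.ofReal (1 - x)) x := by
    intro x
    by_cases hx : (0:ℝ) ≤ x
    · have : Prod.mk x ⁻¹' {p : ℝ × ℝ | 0 ≤ p.1 ∧ 0 ≤ p.2 ∧ p.1 + p.2 ≤ 1} = Icc 0 (1 - x) := by
        ext y; simp only [mem_preimage, mem_setOf_eq, mem_Icc]
        constructor
        · rintro ⟨_, h2, h3⟩; exact ⟨h2, by linarith⟩
        · rintro ⟨h2, h3⟩; exact ⟨hx, h2, by linarith⟩
      rw [this, Real.volume_Icc, indicator_of_mem (mem_Ici.2 hx)]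
      norm_num
    · have : Prod.mk x ⁻¹' {p : ℝ × ℝ | 0 ≤ p.1 ∧ 0 ≤ p.2 ∧ p.1 + p.2 ≤ 1} = ∅ := by
        ext y; simp only [mem_preimage, mem_setOf_eq, mem_empty_iff_false, iff_false]
        rintro ⟨h1, _, _⟩; exact hx h1
      rw [this, measure_empty, indicator_of_notMem (by simpa using hx)]
  rw [lintegral_congr hfib, lintegral_indicator measurableSet_Ici]
  have hsplit : Ici (0:ℝ) = Icc 0 1 ∪ Ioi 1 := by
    ext x; simp only [mem_Ici, mem_union, mem_Icc, mem_Ioi]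
    constructor
    · intro h; rcases le_or_gt x 1 with h1 | h1
      · exact Or.inl ⟨h, h1⟩
      · exact Or.inr h1
    · rintro (⟨h, _⟩ | h); exact h; linarith
  rw [hsplit, lintegral_union measurableSet_Ioi (by
    rw [Set.disjoint_iff]; rintro x ⟨⟨_, h1⟩, h2⟩; exact absurd h1 (not_le.2 h2))]
  have h2 : ∫⁻ x in Ioi (1:ℝ), ENNReal.ofReal (1 - x) = 0 := by
    rw [setLIntegral_congr_fun measurableSet_Ioi (fun x hx => by
      rw [ENNReal.ofReal_eq_zero.2 (by linarith [mem_Ioi.1 hx])]), lintegral_zero]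
  rw [h2, add_zero]
  rw [← ofReal_integral_eq_lintegral_ofReal]
  · congr 1
    rw [integral_Icc_eq_integral_Ioc, ← intervalIntegral.integral_of_le zero_le_one]
    have : ∫ x in (0:ℝ)..1, (1 - x) = 1 - 1^2/2 := by
      rw [intervalIntegral.integral_sub intervalIntegrable_const intervalIntegral.intervalIntegrable_id,
        intervalIntegral.integral_const, _root_.integral_id]
      norm_num
    rw [this]; norm_num
  · exact (continuous_const.sub continuous_id).integrableOn_Icc.integrable
  · exact (ae_restrict_iff' measurableSet_Icc).2 (ae_of_all _ fun x hx => by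
      simp only [Pi.zero_apply]; linarith [(mem_Icc.1 hx).2])

lemma vol_tri_E : volume {x : EuclideanSpace ℝ (Fin 2) | 0 ≤ x 0 ∧ 0 ≤ x 1 ∧ x 0 + x 1 ≤ 1}
    = ENNReal.ofReal (1/2) := by
  have h := (volume_preserving_finTwoArrow ℝ).comp
    (EuclideanSpace.volume_preserving_symm_measurableEquiv_toLp (Fin 2))
  have hcl : IsClosed {p : ℝ × ℝ | 0 ≤ p.1 ∧ 0 ≤ p.2 ∧ p.1 + p.2 ≤ 1} := by
    apply IsClosed.inter (isClosed_le continuous_const continuous_fst)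
    exact IsClosed.inter (isClosed_le continuous_const continuous_snd)
      (isClosed_le (continuous_fst.add continuous_snd) continuous_const)
  have hpre : (⇑MeasurableEquiv.finTwoArrow ∘ ⇑(MeasurableEquiv.toLp 2 (Fin 2 → ℝ)).symm)
      ⁻¹' {p : ℝ × ℝ | 0 ≤ p.1 ∧ 0 ≤ p.2 ∧ p.1 + p.2 ≤ 1}
      = {x : EuclideanSpace ℝ (Fin 2) | 0 ≤ x 0 ∧ 0 ≤ x 1 ∧ x 0 + x 1 ≤ 1} := by
    ext x
    simp [MeasurableEquiv.finTwoArrow]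
  rw [← hpre, h.measure_preimage hcl.measurableSet.nullMeasurableSet, vol_tri_prod]

-- convexHull identification
lemma hull_eq : convexHull ℝ ({0, EuclideanSpace.single 0 (1:ℝ), EuclideanSpace.single 1 (1:ℝ)} :
      Set (EuclideanSpace ℝ (Fin 2)))
    = {x : EuclideanSpace ℝ (Fin 2) | 0 ≤ x 0 ∧ 0 ≤ x 1 ∧ x 0 + x 1 ≤ 1} := by
  apply le_antisymm
  · apply convexHull_min
    · rintro x (rfl | rfl | rfl) <;>
        simp [EuclideanSpace.single_apply, Set.mem_setOf_eq]
    · have h1 : Convex ℝ {x : EuclideanSpace ℝ (Fin 2) | 0 ≤ x 0} :=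
        convex_halfSpace_ge (LinearMap.isLinear (EuclideanSpace.proj 0 : EuclideanSpace ℝ (Fin 2) →L[ℝ] ℝ).toLinearMap) 0
      have h2 : Convex ℝ {x : EuclideanSpace ℝ (Fin 2) | 0 ≤ x 1} :=
        convex_halfSpace_ge (LinearMap.isLinear (EuclideanSpace.proj 1 : EuclideanSpace ℝ (Fin 2) →L[ℝ] ℝ).toLinearMap) 0
      have h3 : Convex ℝ {x : EuclideanSpace ℝ (Fin 2) | x 0 + x 1 ≤ 1} :=
        convex_halfSpace_le (LinearMap.isLinear
          ((EuclideanSpace.proj 0 : EuclideanSpace ℝ (Fin 2) →L[ℝ] ℝ).toLinearMap + (EuclideanSpace.proj 1 : EuclideanSpace ℝ (Fin 2) →L[ℝ] ℝ).toLinearMap)) 1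
      have : {x : EuclideanSpace ℝ (Fin 2) | 0 ≤ x 0 ∧ 0 ≤ x 1 ∧ x 0 + x 1 ≤ 1}
          = {x | 0 ≤ x 0} ∩ ({x | 0 ≤ x 1} ∩ {x | x 0 + x 1 ≤ 1}) := by
        ext x; simp [Set.mem_setOf_eq, and_assoc]
      rw [this]
      exact h1.inter (h2.inter h3)
  · rintro x ⟨hx0, hx1, hxs⟩
    have hx : x = Finset.univ.centerMass ![1 - x 0 - x 1, x 0, x 1]
        ![0, EuclideanSpace.single 0 (1:ℝ), EuclideanSpace.single 1 (1:ℝ)] := by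
      rw [Finset.centerMass]
      have hsum : ∑ i, (![1 - x 0 - x 1, x 0, x 1] : Fin 3 → ℝ) i = 1 := by
        simp [Fin.sum_univ_three]; ring
      rw [hsum, inv_one, one_smul]
      rw [Fin.sum_univ_three]
      show x = (1 - x 0 - x 1) • (0 : EuclideanSpace ℝ (Fin 2)) + _ + _
      ext i
      fin_cases i <;>
        simp [EuclideanSpace.single_apply, PiLp.add_apply, PiLp.smul_apply]
    rw [hx]
    apply Finset.centerMass_mem_convexHull
    · intro i _
      fin_cases i <;> simp <;> linarith
    · rw [Fin.sum_univ_three]; simp; linarith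
    · intro i _
      fin_cases i <;> simp [Set.mem_insert_iff]

noncomputable def Lmap (u w : EuclideanSpace ℝ (Fin 2)) :
    EuclideanSpace ℝ (Fin 2) →ₗ[ℝ] EuclideanSpace ℝ (Fin 2) where
  toFun p := p 0 • u + p 1 • w
  map_add' p q := by
    simp only [PiLp.add_apply, add_smul]; abel
  map_smul' c p := by
    simp only [PiLp.smul_apply, RingHom.id_apply, smul_add, smul_smul, smul_eq_mul]

lemma Lmap_det (u w : EuclideanSpace ℝ (Fin 2)) :
    LinearMap.det (Lmap u w) = u 0 * w 1 - u 1 * w 0 := by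
  rw [← LinearMap.det_toMatrix (EuclideanSpace.basisFun (Fin 2) ℝ).toBasis,
    Matrix.det_fin_two]
  simp only [LinearMap.toMatrix_apply, OrthonormalBasis.coe_toBasis,
    EuclideanSpace.basisFun_apply]
  have h : ∀ i j : Fin 2, ((EuclideanSpace.basisFun (Fin 2) ℝ).toBasis.repr
      ((Lmap u w) (EuclideanSpace.single j 1))) i = ((Lmap u w) (EuclideanSpace.single j 1)) i :=
    fun i j => rfl
  rw [h, h, h, h]
  have hL : ∀ j : Fin 2, (Lmap u w) (EuclideanSpace.single j 1)
      = (EuclideanSpace.single j (1:ℝ)) 0 • u + (EuclideanSpace.single j (1:ℝ)) 1 • w := fun j => rfl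
  rw [hL, hL]
  simp [EuclideanSpace.single_apply, PiLp.add_apply, PiLp.smul_apply]
  ring

lemma vol_triangle (z₁ z₂ z₃ : EuclideanSpace ℝ (Fin 2)) :
    volume (convexHull ℝ ({z₁, z₂, z₃} : Set (EuclideanSpace ℝ (Fin 2))))
      = ENNReal.ofReal (|(z₂ - z₁) 0 * (z₃ - z₁) 1 - (z₂ - z₁) 1 * (z₃ - z₁) 0| / 2) := by
  set u := z₂ - z₁
  set w := z₃ - z₁
  set L := Lmap u w
  set F : EuclideanSpace ℝ (Fin 2) →ᵃ[ℝ] EuclideanSpace ℝ (Fin 2) :=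
    AffineMap.const ℝ (EuclideanSpace ℝ (Fin 2)) z₁ + L.toAffineMap with hF
  have hFx : ∀ x, F x = z₁ + L x := fun x => rfl
  have himg : F '' ({0, EuclideanSpace.single 0 (1:ℝ), EuclideanSpace.single 1 (1:ℝ)} :
      Set (EuclideanSpace ℝ (Fin 2))) = {z₁, z₂, z₃} := by
    rw [Set.image_insert_eq, Set.image_insert_eq, Set.image_singleton]
    congr 1
    · rw [hFx]; simp
    congr 1
    · rw [hFx]
      show z₁ + ((EuclideanSpace.single 0 (1:ℝ)) 0 • u + (EuclideanSpace.single 0 (1:ℝ)) 1 • w) = z₂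
      simp [EuclideanSpace.single_apply, u]
    congr 1
    · rw [hFx]
      show z₁ + ((EuclideanSpace.single 1 (1:ℝ)) 0 • u + (EuclideanSpace.single 1 (1:ℝ)) 1 • w) = z₃
      simp [EuclideanSpace.single_apply, w]
  have hhull : convexHull ℝ ({z₁, z₂, z₃} : Set (EuclideanSpace ℝ (Fin 2)))
      = (fun x => z₁ + x) '' (L '' {x : EuclideanSpace ℝ (Fin 2) | 0 ≤ x 0 ∧ 0 ≤ x 1 ∧ x 0 + x 1 ≤ 1}) := by
    rw [← hull_eq, ← himg, ← AffineMap.image_convexHull, ← Set.image_comp]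
    rfl
  rw [hhull]
  set A := L '' {x : EuclideanSpace ℝ (Fin 2) | 0 ≤ x 0 ∧ 0 ≤ x 1 ∧ x 0 + x 1 ≤ 1} with hA
  have htrans : (fun x : EuclideanSpace ℝ (Fin 2) => z₁ + x) '' A
      = (fun x => -z₁ + x) ⁻¹' A := by
    ext y; simp only [Set.mem_image, Set.mem_preimage]
    constructor
    · rintro ⟨a, ha, rfl⟩
      have : -z₁ + (z₁ + a) = a := by abel
      rwa [this]
    · intro ha
      exact ⟨-z₁ + y, ha, by abel⟩
  rw [htrans, measure_preimage_add, hA, Measure.addHaar_image_linearMap, vol_tri_E, Lmap_det]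
  rw [← ENNReal.ofReal_mul (abs_nonneg _)]
  congr 1
  simp only [PiLp.sub_apply, u, w]
  ring

lemma inner2 (x y : EuclideanSpace ℝ (Fin 2)) : ⟪x, y⟫ = x 0 * y 0 + x 1 * y 1 := by
  simp [PiLp.inner_apply, Fin.sum_univ_two, RCLike.inner_apply]; ring

lemma normsq2 (x : EuclideanSpace ℝ (Fin 2)) : x 0 ^ 2 + x 1 ^ 2 = ‖x‖ ^ 2 := by
  rw [← real_inner_self_eq_norm_sq, inner2]; ring

lemma perp_char (n a : EuclideanSpace ℝ (Fin 2)) (ha : ¬(a 0 = 0 ∧ a 1 = 0))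
    (h : n 0 * a 0 + n 1 * a 1 = 0) :
    ∃ c : ℝ, n 0 = c * a 1 ∧ n 1 = -(c * a 0) := by
  by_cases h1 : a 1 = 0
  · have h0 : a 0 ≠ 0 := fun h0 => ha ⟨h0, h1⟩
    have hn0 : n 0 = 0 := by
      have h' : n 0 * a 0 = 0 := by rw [h1] at h; linarith
      rcases mul_eq_zero.1 h' with h'' | h''
      · exact h''
      · exact absurd h'' h0
    exact ⟨-(n 1 / a 0), by rw [h1, mul_zero]; exact hn0, by field_simp⟩
  · refine ⟨n 0 / a 1, by field_simp, ?_⟩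
    field_simp
    nlinarith [h]

lemma trace2 (A : EuclideanSpace ℝ (Fin 2) →ₗ[ℝ] EuclideanSpace ℝ (Fin 2)) :
    LinearMap.trace ℝ (EuclideanSpace ℝ (Fin 2)) A
      = (A (EuclideanSpace.single 0 1)) 0 + (A (EuclideanSpace.single 1 1)) 1 := by
  rw [LinearMap.trace_eq_matrix_trace ℝ (EuclideanSpace.basisFun (Fin 2) ℝ).toBasis,
    Matrix.trace_fin_two]
  have h : ∀ i j : Fin 2, (LinearMap.toMatrix (EuclideanSpace.basisFun (Fin 2) ℝ).toBasis
        (EuclideanSpace.basisFun (Fin 2) ℝ).toBasis A) i j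
      = (A (EuclideanSpace.single j 1)) i := by
    intro i j
    rw [LinearMap.toMatrix_apply, OrthonormalBasis.coe_toBasis, EuclideanSpace.basisFun_apply]
    rfl
  rw [h, h]

lemma apply2 (A : EuclideanSpace ℝ (Fin 2) →ₗ[ℝ] EuclideanSpace ℝ (Fin 2))
    (x : EuclideanSpace ℝ (Fin 2)) (i : Fin 2) :
    (A x) i = x 0 * (A (EuclideanSpace.single 0 1)) i + x 1 * (A (EuclideanSpace.single 1 1)) i := by
  have hx : x = x 0 • EuclideanSpace.single 0 (1:ℝ) + x 1 • EuclideanSpace.single 1 (1:ℝ) := by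
    ext j; fin_cases j <;> simp [EuclideanSpace.single_apply]
  conv_lhs => rw [hx]
  rw [map_add, _root_.map_smul, _root_.map_smul]
  simp [PiLp.add_apply, PiLp.smul_apply]

end AuxDivergenceTriangle

/-- For a nondegenerate triangle `T = conv{z₁,z₂,z₃} ⊂ ℝ²` with edge
lengths `ℓᵢ` and outward unit normals `nᵢ`, and an affine map `v : ℝ² →ᵃ ℝ²` with linear
part `A`, one has `∫_T div v dx = -(1/2) ∑ᵢ ℓᵢ (v(zᵢ) · nᵢ)`. -/
theorem integral_div_affine_eq_boundary_sum
    (z₁ z₂ z₃ n₁ n₂ n₃ : EuclideanSpace ℝ (Fin 2))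
    (hindep : AffineIndependent ℝ ![z₁, z₂, z₃])
    (hn₁norm : ‖n₁‖ = 1) (hn₁perp : ⟪n₁, z₃ - z₂⟫ = 0) (hn₁out : ⟪n₁, z₁ - z₂⟫ < 0)
    (hn₂norm : ‖n₂‖ = 1) (hn₂perp : ⟪n₂, z₁ - z₃⟫ = 0) (hn₂out : ⟪n₂, z₂ - z₃⟫ < 0)
    (hn₃norm : ‖n₃‖ = 1) (hn₃perp : ⟪n₃, z₂ - z₁⟫ = 0) (hn₃out : ⟪n₃, z₃ - z₁⟫ < 0)
    (v : EuclideanSpace ℝ (Fin 2) →ᵃ[ℝ] EuclideanSpace ℝ (Fin 2)) :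
    (∫ _x in convexHull ℝ ({z₁, z₂, z₃} : Set (EuclideanSpace ℝ (Fin 2))),
        LinearMap.trace ℝ (EuclideanSpace ℝ (Fin 2)) v.linear ∂volume)
      = -(1/2) * (‖z₃ - z₂‖ * ⟪v z₁, n₁⟫ + ‖z₁ - z₃‖ * ⟪v z₂, n₂⟫ + ‖z₂ - z₁‖ * ⟪v z₃, n₃⟫) ∧
    (volume (convexHull ℝ ({z₁, z₂, z₃} : Set (EuclideanSpace ℝ (Fin 2))))).toReal
        * LinearMap.trace ℝ (EuclideanSpace ℝ (Fin 2)) v.linear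
      = -(1/2) * (‖z₃ - z₂‖ * ⟪v z₁, n₁⟫ + ‖z₁ - z₃‖ * ⟪v z₂, n₂⟫ + ‖z₂ - z₁‖ * ⟪v z₃, n₃⟫) := by
  -- coordinate versions of the hypotheses
  rw [inner2] at hn₁perp hn₁out hn₂perp hn₂out hn₃perp hn₃out
  simp only [PiLp.sub_apply] at hn₁perp hn₁out hn₂perp hn₂out hn₃perp hn₃out
  set d : ℝ := (z₂ 0 - z₁ 0) * (z₃ 1 - z₁ 1) - (z₂ 1 - z₁ 1) * (z₃ 0 - z₁ 0) with hd_def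
  -- d ≠ 0
  have hd : d ≠ 0 := by
    intro h0
    rw [hd_def] at h0
    have e1 : (z₂ 0 - z₁ 0) * (n₃ 0 * (z₃ 0 - z₁ 0) + n₃ 1 * (z₃ 1 - z₁ 1)) = 0 := by
      linear_combination n₃ 1 * h0 + (z₃ 0 - z₁ 0) * hn₃perp
    have e2 : (z₂ 1 - z₁ 1) * (n₃ 0 * (z₃ 0 - z₁ 0) + n₃ 1 * (z₃ 1 - z₁ 1)) = 0 := by
      linear_combination (-(n₃ 0)) * h0 + (z₃ 1 - z₁ 1) * hn₃perp
    have hT : n₃ 0 * (z₃ 0 - z₁ 0) + n₃ 1 * (z₃ 1 - z₁ 1) ≠ 0 := ne_of_lt hn₃out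
    have hu0 : z₂ 0 - z₁ 0 = 0 := by
      rcases mul_eq_zero.1 e1 with h | h
      · exact h
      · exact absurd h hT
    have hu1 : z₂ 1 - z₁ 1 = 0 := by
      rcases mul_eq_zero.1 e2 with h | h
      · exact h
      · exact absurd h hT
    have heq : n₂ 0 * (z₂ 0 - z₃ 0) + n₂ 1 * (z₂ 1 - z₃ 1)
        = n₂ 0 * (z₁ 0 - z₃ 0) + n₂ 1 * (z₁ 1 - z₃ 1) := by
      linear_combination n₂ 0 * hu0 + n₂ 1 * hu1
    rw [heq] at hn₂out
    linarith
  -- normal structure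
  obtain ⟨c₁, hc₁0, hc₁1⟩ : ∃ c : ℝ, n₁ 0 = c * ((z₃ - z₂) 1) ∧ n₁ 1 = -(c * ((z₃ - z₂) 0)) := by
    apply perp_char
    · simp only [PiLp.sub_apply]
      rintro ⟨p, q⟩
      apply hd
      rw [hd_def]
      linear_combination (z₂ 0 - z₁ 0) * q - (z₂ 1 - z₁ 1) * p
    · simp only [PiLp.sub_apply]; linarith [hn₁perp]
  obtain ⟨c₂, hc₂0, hc₂1⟩ : ∃ c : ℝ, n₂ 0 = c * ((z₁ - z₃) 1) ∧ n₂ 1 = -(c * ((z₁ - z₃) 0)) := by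
    apply perp_char
    · simp only [PiLp.sub_apply]
      rintro ⟨p, q⟩
      apply hd
      rw [hd_def]
      linear_combination (-(z₂ 0 - z₁ 0)) * q + (z₂ 1 - z₁ 1) * p
    · simp only [PiLp.sub_apply]; linarith [hn₂perp]
  obtain ⟨c₃, hc₃0, hc₃1⟩ : ∃ c : ℝ, n₃ 0 = c * ((z₂ - z₁) 1) ∧ n₃ 1 = -(c * ((z₂ - z₁) 0)) := by
    apply perp_char
    · simp only [PiLp.sub_apply]
      rintro ⟨p, q⟩
      apply hd
      rw [hd_def]
      linear_combination (z₃ 1 - z₁ 1) * p - (z₃ 0 - z₁ 0) * q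
    · simp only [PiLp.sub_apply]; linarith [hn₃perp]
  simp only [PiLp.sub_apply] at hc₁0 hc₁1 hc₂0 hc₂1 hc₃0 hc₃1
  -- sign factors
  have habs : ∀ (a : EuclideanSpace ℝ (Fin 2)) (c : ℝ) (n : EuclideanSpace ℝ (Fin 2)),
      ‖n‖ = 1 → n 0 = c * a 1 → n 1 = -(c * a 0) → 0 < c * d → ‖a‖ * c = |d| / d := by
    intro a c n hn h0 h1 hcd
    have hnsq : n 0 ^ 2 + n 1 ^ 2 = 1 := by rw [normsq2, hn]; norm_num
    have hasq : a 0 ^ 2 + a 1 ^ 2 = ‖a‖ ^ 2 := normsq2 a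
    have hssq : (‖a‖ * c) ^ 2 = 1 := by
      have : (‖a‖ * c) ^ 2 = (a 0 ^ 2 + a 1 ^ 2) * c ^ 2 := by rw [hasq]; ring
      rw [this, ← hnsq, h0, h1]; ring
    have hfac : (‖a‖ * c - 1) * (‖a‖ * c + 1) = 0 := by linear_combination hssq
    have hapos : 0 < ‖a‖ := by
      rcases (norm_nonneg a).lt_or_eq with h | h
      · exact h
      · exfalso; rw [← h] at hssq; simp at hssq
    have hsd : 0 < (‖a‖ * c) * d := by
      have : (‖a‖ * c) * d = ‖a‖ * (c * d) := by ring
      rw [this]; exact mul_pos hapos hcd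
    rcases mul_eq_zero.1 hfac with h | h
    · have hs1 : ‖a‖ * c = 1 := by linarith
      have hdpos : 0 < d := by rw [hs1, one_mul] at hsd; exact hsd
      rw [hs1, abs_of_pos hdpos, div_self (ne_of_gt hdpos)]
    · have hs1 : ‖a‖ * c = -1 := by linarith
      have hdneg : d < 0 := by rw [hs1] at hsd; linarith [hsd]
      rw [hs1, abs_of_neg hdneg]
      field_simp
  have hcd₁ : 0 < c₁ * d := by
    have heq : n₁ 0 * (z₁ 0 - z₂ 0) + n₁ 1 * (z₁ 1 - z₂ 1) = -(c₁ * d) := by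
      rw [hc₁0, hc₁1, hd_def]; ring
    rw [heq] at hn₁out; linarith
  have hcd₂ : 0 < c₂ * d := by
    have heq : n₂ 0 * (z₂ 0 - z₃ 0) + n₂ 1 * (z₂ 1 - z₃ 1) = -(c₂ * d) := by
      rw [hc₂0, hc₂1, hd_def]; ring
    rw [heq] at hn₂out; linarith
  have hcd₃ : 0 < c₃ * d := by
    have heq : n₃ 0 * (z₃ 0 - z₁ 0) + n₃ 1 * (z₃ 1 - z₁ 1) = -(c₃ * d) := by
      rw [hc₃0, hc₃1, hd_def]; ring
    rw [heq] at hn₃out; linarith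
  have hs₁ : ‖z₃ - z₂‖ * c₁ = |d| / d :=
    habs _ _ n₁ hn₁norm (by rw [hc₁0]; simp [PiLp.sub_apply])
      (by rw [hc₁1]; simp [PiLp.sub_apply]) hcd₁
  have hs₂ : ‖z₁ - z₃‖ * c₂ = |d| / d :=
    habs _ _ n₂ hn₂norm (by rw [hc₂0]; simp [PiLp.sub_apply])
      (by rw [hc₂1]; simp [PiLp.sub_apply]) hcd₂
  have hs₃ : ‖z₂ - z₁‖ * c₃ = |d| / d :=
    habs _ _ n₃ hn₃norm (by rw [hc₃0]; simp [PiLp.sub_apply])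
      (by rw [hc₃1]; simp [PiLp.sub_apply]) hcd₃
  -- terms
  set A := v.linear with hA
  set m00 := (A (EuclideanSpace.single 0 1)) 0 with hm00
  set m10 := (A (EuclideanSpace.single 0 1)) 1 with hm10
  set m01 := (A (EuclideanSpace.single 1 1)) 0 with hm01
  set m11 := (A (EuclideanSpace.single 1 1)) 1 with hm11
  have hv : ∀ (z : EuclideanSpace ℝ (Fin 2)) (i : Fin 2),
      v z i = v z₁ i + (z 0 - z₁ 0) * (A (EuclideanSpace.single 0 1)) i
        + (z 1 - z₁ 1) * (A (EuclideanSpace.single 1 1)) i := by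
    intro z i
    have hvs : A (z - z₁) = v z - v z₁ := by
      have := v.linearMap_vsub z z₁
      simpa [vsub_eq_sub] using this
    have h1 : (A (z - z₁)) i = (z 0 - z₁ 0) * (A (EuclideanSpace.single 0 1)) i
        + (z 1 - z₁ 1) * (A (EuclideanSpace.single 1 1)) i := by
      rw [apply2]
      simp [PiLp.sub_apply]
    rw [hvs] at h1
    simp only [PiLp.sub_apply] at h1
    linarith [h1]
  have hterm₁ : ‖z₃ - z₂‖ * ⟪v z₁, n₁⟫
      = (‖z₃ - z₂‖ * c₁) * (v z₁ 0 * (z₃ 1 - z₂ 1) - v z₁ 1 * (z₃ 0 - z₂ 0)) := by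
    rw [inner2, hc₁0, hc₁1]; ring
  have hterm₂ : ‖z₁ - z₃‖ * ⟪v z₂, n₂⟫
      = (‖z₁ - z₃‖ * c₂) * (v z₂ 0 * (z₁ 1 - z₃ 1) - v z₂ 1 * (z₁ 0 - z₃ 0)) := by
    rw [inner2, hc₂0, hc₂1]; ring
  have hterm₃ : ‖z₂ - z₁‖ * ⟪v z₃, n₃⟫
      = (‖z₂ - z₁‖ * c₃) * (v z₃ 0 * (z₂ 1 - z₁ 1) - v z₃ 1 * (z₂ 0 - z₁ 0)) := by
    rw [inner2, hc₃0, hc₃1]; ring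
  have hvol : (volume (convexHull ℝ ({z₁, z₂, z₃} : Set (EuclideanSpace ℝ (Fin 2))))).toReal
      = |d| / 2 := by
    rw [vol_triangle, ENNReal.toReal_ofReal (by positivity)]
    congr 2
  have key : (volume (convexHull ℝ ({z₁, z₂, z₃} : Set (EuclideanSpace ℝ (Fin 2))))).toReal
        * LinearMap.trace ℝ (EuclideanSpace ℝ (Fin 2)) v.linear
      = -(1/2) * (‖z₃ - z₂‖ * ⟪v z₁, n₁⟫ + ‖z₁ - z₃‖ * ⟪v z₂, n₂⟫ + ‖z₂ - z₁‖ * ⟪v z₃, n₃⟫) := by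
    rw [hvol, ← hA, trace2, hterm₁, hterm₂, hterm₃, hs₁, hs₂, hs₃,
      hv z₂ 0, hv z₂ 1, hv z₃ 0, hv z₃ 1, ← hm00, ← hm10, ← hm01, ← hm11, hd_def]
    have hd' : (z₂ 0 - z₁ 0) * (z₃ 1 - z₁ 1) - (z₂ 1 - z₁ 1) * (z₃ 0 - z₁ 0) ≠ 0 := hd
    field_simp
    ring
  refine ⟨?_, key⟩
  rw [setIntegral_const, smul_eq_mul]
  exact key
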